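/- Let β±_{r,s} = ((r−1)α₊ ± sα₋)/2. Then the regularized atypical character factorizes as ch[M^ε_{r,s}](τ) = ch[F^ε_{α₀/2−β⁻_{r,s}}](τ)·P_{α₊ε}(−α₊β⁻_{r,s}τ; α₊²τ) − ch[F^ε_{α₀/2−β⁺_{r,s}}](τ)·P_{α₊ε}(−α₊β⁺_{r,s}τ; α₊²τ). -/

import Mathlib

open Complex

/-- `α₊ = √(2p)`. -/
noncomputable def alphaP (p : ℕ) : ℂ := (Real.sqrt (2 * p) : ℝ)

/-- `α₋ = −√(2/p)`. -/
noncomputable def alphaM (p : ℕ) : ℂ := -(Real.sqrt (2 / p) : ℝ)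

/-- `α₀ = α₊ + α₋`. -/
noncomputable def alpha0 (p : ℕ) : ℂ := alphaP p + alphaM p

/-- `α_{r,s} = −(rα₊ + sα₋ − α₀)/2`. -/
noncomputable def alphaRS (p : ℕ) (r s : ℤ) : ℂ :=
  -((r : ℂ) * alphaP p + (s : ℂ) * alphaM p - alpha0 p) / 2

/-- The Dedekind eta function `η(τ) = q^{1/24} ∏_{i≥1} (1 − q^i)`, `q = e^{2πiτ}`. -/
noncomputable def dedekindEta (τ : ℂ) : ℂ :=
  Complex.exp ((Real.pi : ℂ) * I * τ / 12) *
    ∏' n : ℕ, (1 - Complex.exp (2 * (Real.pi : ℂ) * I * τ * ((n : ℂ) + 1)))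

/-- Regularized typical character `ch[F^ε_λ](τ) = e^{2πε(λ−α₀/2)} q^{(λ−α₀/2)²/2}/η(τ)`. -/
noncomputable def chF (p : ℕ) (ε lam τ : ℂ) : ℂ :=
  Complex.exp (2 * (Real.pi : ℂ) * ε * (lam - alpha0 p / 2)) *
    Complex.exp ((Real.pi : ℂ) * I * τ * (lam - alpha0 p / 2)^2) / dedekindEta τ

/-- Regularized atypical character
`ch[M^ε_{r,s}](τ) = ∑_{n≥0} (ch[F^ε_{α_{r−2n−1,p−s}}](τ) − ch[F^ε_{α_{r−2n−2,s}}](τ))`. -/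
noncomputable def chM (p : ℕ) (ε : ℂ) (r s : ℤ) (τ : ℂ) : ℂ :=
  ∑' n : ℕ, (chF p ε (alphaRS p (r - 2 * (n : ℤ) - 1) ((p : ℤ) - s)) τ -
             chF p ε (alphaRS p (r - 2 * (n : ℤ) - 2) s) τ)

/-- Regularized partial theta function. -/
noncomputable def regPartialTheta (ε u τ : ℂ) : ℂ :=
  ∑' n : ℕ, Complex.exp (2 * (Real.pi : ℂ) * I * u * ((n : ℂ) + 1/2)) *
    Complex.exp (2 * (Real.pi : ℂ) * ε * ((n : ℂ) + 1/2)) *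
    Complex.exp ((Real.pi : ℂ) * I * τ * ((n : ℂ) + 1/2)^2)

/-- `β⁺_{r,s} = ((r−1)α₊ + sα₋)/2`. -/
noncomputable def betaPlus (p : ℕ) (r s : ℤ) : ℂ := (((r : ℂ) - 1) * alphaP p + (s : ℂ) * alphaM p) / 2

/-- `β⁻_{r,s} = ((r−1)α₊ − sα₋)/2`. -/
noncomputable def betaMinus (p : ℕ) (r s : ℤ) : ℂ := (((r : ℂ) - 1) * alphaP p - (s : ℂ) * alphaM p) / 2


lemma exp_split (ε τ a b d k : ℂ) :
    Complex.exp (2*(Real.pi:ℂ)*ε*(-b + a*k)) * Complex.exp ((Real.pi:ℂ)*I*τ*(-b + a*k)^2) / d =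
    Complex.exp (2*(Real.pi:ℂ)*ε*(-b)) * Complex.exp ((Real.pi:ℂ)*I*τ*(-b)^2) / d *
      (Complex.exp (2*(Real.pi:ℂ)*I*(-a*b*τ)*k) * Complex.exp (2*(Real.pi:ℂ)*(a*ε)*k) *
        Complex.exp ((Real.pi:ℂ)*I*(a^2*τ)*k^2)) := by
  rw [div_mul_eq_mul_div]
  congr 1
  simp only [← Complex.exp_add]
  congr 1
  ring

lemma summable_theta_terms (u ε' τ' : ℂ) (h : 0 < τ'.im) :
    Summable (fun n : ℕ => Complex.exp (2*(Real.pi:ℂ)*I*u*((n:ℂ)+1/2)) *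
      Complex.exp (2*(Real.pi:ℂ)*ε'*((n:ℂ)+1/2)) *
      Complex.exp ((Real.pi:ℂ)*I*τ'*((n:ℂ)+1/2)^2)) := by
  have hs : Summable (fun n : ℤ => jacobiTheta₂_term n (u - I*ε' + τ'/2) τ') :=
    (summable_jacobiTheta₂_term_iff _ _).mpr h
  have hs2 := (hs.comp_injective (Nat.cast_injective : Function.Injective (fun n : ℕ => (n : ℤ)))).mul_left
      (Complex.exp ((Real.pi:ℂ)*I*u + (Real.pi:ℂ)*ε' + (Real.pi:ℂ)*I*τ'/4))
  refine hs2.congr fun n => ?_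
  simp only [Function.comp, jacobiTheta₂_term]
  rw [← Complex.exp_add, ← Complex.exp_add, ← Complex.exp_add]
  congr 1
  push_cast
  ring_nf
  rw [Complex.I_sq]
  ring

theorem stmt13 (p : ℕ) (hp : 2 ≤ p) (ε τ : ℂ) (hε : ε.re < 0) (hτ : 0 < τ.im)
    (r s : ℤ) (hs1 : 1 ≤ s) (hs2 : s ≤ (p : ℤ)) :
    chM p ε r s τ =
      chF p ε (alpha0 p / 2 - betaMinus p r s) τ *
        regPartialTheta (alphaP p * ε) (-(alphaP p) * betaMinus p r s * τ) ((alphaP p)^2 * τ) -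
      chF p ε (alpha0 p / 2 - betaPlus p r s) τ *
        regPartialTheta (alphaP p * ε) (-(alphaP p) * betaPlus p r s * τ) ((alphaP p)^2 * τ) := by
  have hp0 : (0:ℝ) < p := by positivity
  have hpb : (p:ℂ) * alphaM p = -alphaP p := by
    have : (p:ℝ) * Real.sqrt (2/p) = Real.sqrt (2*p) := by
      rw [← Real.sqrt_sq hp0.le, ← Real.sqrt_mul (by positivity)]
      congr 1
      field_simp
      rw [Real.sq_sqrt (by positivity)]
    simp only [alphaM, alphaP, mul_neg, ← this]
    push_cast
    ring
  have ha2 : (alphaP p)^2 = ((2*p:ℝ):ℂ) := by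
    rw [alphaP, ← Complex.ofReal_pow, Real.sq_sqrt (by positivity)]
  have hτ' : 0 < ((alphaP p)^2 * τ).im := by
    rw [ha2, Complex.im_ofReal_mul]
    positivity
  have hm : ∀ n : ℕ, alphaRS p (r - 2*(n:ℤ) - 1) ((p:ℤ) - s) - alpha0 p / 2 =
      -(betaMinus p r s) + alphaP p * ((n:ℂ) + 1/2) := by
    intro n
    simp only [alphaRS, betaMinus, alpha0]
    push_cast
    linear_combination (-1/2 : ℂ) * hpb
  have hpl : ∀ n : ℕ, alphaRS p (r - 2*(n:ℤ) - 2) s - alpha0 p / 2 =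
      -(betaPlus p r s) + alphaP p * ((n:ℂ) + 1/2) := by
    intro n
    simp only [alphaRS, betaPlus, alpha0]
    push_cast
    ring
  have hbm : alpha0 p / 2 - betaMinus p r s - alpha0 p / 2 = -(betaMinus p r s) := by ring
  have hbp : alpha0 p / 2 - betaPlus p r s - alpha0 p / 2 = -(betaPlus p r s) := by ring
  have key : ∀ n : ℕ,
      chF p ε (alphaRS p (r - 2*(n:ℤ) - 1) ((p:ℤ) - s)) τ -
        chF p ε (alphaRS p (r - 2*(n:ℤ) - 2) s) τ =
      chF p ε (alpha0 p / 2 - betaMinus p r s) τ *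
        (Complex.exp (2*(Real.pi:ℂ)*I*(-(alphaP p) * betaMinus p r s * τ)*((n:ℂ)+1/2)) *
         Complex.exp (2*(Real.pi:ℂ)*(alphaP p * ε)*((n:ℂ)+1/2)) *
         Complex.exp ((Real.pi:ℂ)*I*((alphaP p)^2*τ)*((n:ℂ)+1/2)^2)) -
      chF p ε (alpha0 p / 2 - betaPlus p r s) τ *
        (Complex.exp (2*(Real.pi:ℂ)*I*(-(alphaP p) * betaPlus p r s * τ)*((n:ℂ)+1/2)) *
         Complex.exp (2*(Real.pi:ℂ)*(alphaP p * ε)*((n:ℂ)+1/2)) *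
         Complex.exp ((Real.pi:ℂ)*I*((alphaP p)^2*τ)*((n:ℂ)+1/2)^2)) := by
    intro n
    simp only [chF, hm n, hpl n, hbm, hbp]
    rw [exp_split, exp_split]
  have sm := (summable_theta_terms (-(alphaP p) * betaMinus p r s * τ) (alphaP p * ε)
      ((alphaP p)^2 * τ) hτ').mul_left (chF p ε (alpha0 p / 2 - betaMinus p r s) τ)
  have sp := (summable_theta_terms (-(alphaP p) * betaPlus p r s * τ) (alphaP p * ε)
      ((alphaP p)^2 * τ) hτ').mul_left (chF p ε (alpha0 p / 2 - betaPlus p r s) τ)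
  rw [chM, tsum_congr key, Summable.tsum_sub sm sp, regPartialTheta, regPartialTheta,
    tsum_mul_left, tsum_mul_left]
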